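/- arXiv:1401.4594 — 6 statements merged into one kernel-verified Lean document; each statement's English description precedes it below -/
import Mathlib

section
/- Let a hyperbolic triangle have side lengths x1, x2, x3 with opposite angles a1, a2, a3 (so that a_i faces the side of length x_i). Then 2·sin((a2+a3−a1)/2)·cosh(x1/2) = (sinh²(x2/2)+sinh²(x3/2)−sinh²(x1/2))/(sinh(x2/2)·sinh(x3/2)). -/
open Real

theorem stmt_0 (x1 x2 x3 a1 a2 a3 : ℝ)
    (hx1 : 0 < x1) (hx2 : 0 < x2) (hx3 : 0 < x3)
    (ha1 : a1 ∈ Set.Ioo 0 π) (ha2 : a2 ∈ Set.Ioo 0 π) (ha3 : a3 ∈ Set.Ioo 0 π)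
    (hsum : a1 + a2 + a3 < π)
    (h1 : Real.cosh x1 = (Real.cos a1 + Real.cos a2 * Real.cos a3) / (Real.sin a2 * Real.sin a3))
    (h2 : Real.cosh x2 = (Real.cos a2 + Real.cos a1 * Real.cos a3) / (Real.sin a1 * Real.sin a3))
    (h3 : Real.cosh x3 = (Real.cos a3 + Real.cos a1 * Real.cos a2) / (Real.sin a1 * Real.sin a2)) :
    2 * Real.sin ((a2 + a3 - a1) / 2) * Real.cosh (x1 / 2) =
      (Real.sinh (x2 / 2) ^ 2 + Real.sinh (x3 / 2) ^ 2 - Real.sinh (x1 / 2) ^ 2)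
        / (Real.sinh (x2 / 2) * Real.sinh (x3 / 2)) := by
  obtain ⟨ha1l, ha1u⟩ := ha1
  obtain ⟨ha2l, ha2u⟩ := ha2
  obtain ⟨ha3l, ha3u⟩ := ha3
  have hs1 : 0 < Real.sin a1 := Real.sin_pos_of_pos_of_lt_pi ha1l ha1u
  have hs2 : 0 < Real.sin a2 := Real.sin_pos_of_pos_of_lt_pi ha2l ha2u
  have hs3 : 0 < Real.sin a3 := Real.sin_pos_of_pos_of_lt_pi ha3l ha3u
  obtain ⟨S, hSdef⟩ : ∃ S, Real.cos ((a1 + a2 + a3) / 2) = S := ⟨_, rfl⟩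
  obtain ⟨P1, hP1def⟩ : ∃ P1, Real.cos ((a2 + a3 - a1) / 2) = P1 := ⟨_, rfl⟩
  obtain ⟨P2, hP2def⟩ : ∃ P2, Real.cos ((a1 + a3 - a2) / 2) = P2 := ⟨_, rfl⟩
  obtain ⟨P3, hP3def⟩ : ∃ P3, Real.cos ((a1 + a2 - a3) / 2) = P3 := ⟨_, rfl⟩
  have hS : 0 < S := hSdef ▸ Real.cos_pos_of_mem_Ioo ⟨by linarith, by linarith⟩
  have hP1 : 0 < P1 := hP1def ▸ Real.cos_pos_of_mem_Ioo ⟨by linarith, by linarith⟩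
  have hP2 : 0 < P2 := hP2def ▸ Real.cos_pos_of_mem_Ioo ⟨by linarith, by linarith⟩
  have hP3 : 0 < P3 := hP3def ▸ Real.cos_pos_of_mem_Ioo ⟨by linarith, by linarith⟩
  -- half-angle hyperbolic facts
  have hhalf : ∀ x : ℝ, Real.cosh x = 2 * Real.sinh (x / 2) ^ 2 + 1 := by
    intro x
    have h := congrArg Real.cosh (show x = 2 * (x / 2) by ring)
    rw [h, Real.cosh_two_mul, Real.cosh_sq]
    ring
  have hhalf' : ∀ x : ℝ, Real.cosh x = 2 * Real.cosh (x / 2) ^ 2 - 1 := by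
    intro x
    have h := congrArg Real.cosh (show x = 2 * (x / 2) by ring)
    rw [h, Real.cosh_two_mul, Real.cosh_sq]
    ring
  have hne23 : Real.sin a2 * Real.sin a3 ≠ 0 := by positivity
  have hne13 : Real.sin a1 * Real.sin a3 ≠ 0 := by positivity
  have hne12 : Real.sin a1 * Real.sin a2 ≠ 0 := by positivity
  rw [eq_div_iff hne23] at h1
  rw [eq_div_iff hne13] at h2
  rw [eq_div_iff hne12] at h3
  -- expressions for the half side quantities
  have ht1 : Real.sinh (x1 / 2) ^ 2 = S * P1 / (Real.sin a2 * Real.sin a3) := by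
    have e : Real.cos a1 + Real.cos (a2 + a3) = 2 * S * P1 := by
      rw [Real.cos_add_cos,
        show (a1 - (a2 + a3)) / 2 = -((a2 + a3 - a1) / 2) by ring, Real.cos_neg,
        show (a1 + (a2 + a3)) / 2 = (a1 + a2 + a3) / 2 by ring, hSdef, hP1def]
    rw [Real.cos_add] at e
    rw [eq_div_iff hne23]
    linear_combination h1 / 2 - (Real.sin a2 * Real.sin a3) / 2 * hhalf x1 + e / 2
  have ht2 : Real.sinh (x2 / 2) ^ 2 = S * P2 / (Real.sin a1 * Real.sin a3) := by
    have e : Real.cos a2 + Real.cos (a1 + a3) = 2 * S * P2 := by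
      rw [Real.cos_add_cos,
        show (a2 - (a1 + a3)) / 2 = -((a1 + a3 - a2) / 2) by ring, Real.cos_neg,
        show (a2 + (a1 + a3)) / 2 = (a1 + a2 + a3) / 2 by ring, hSdef, hP2def]
    rw [Real.cos_add] at e
    rw [eq_div_iff hne13]
    linear_combination h2 / 2 - (Real.sin a1 * Real.sin a3) / 2 * hhalf x2 + e / 2
  have ht3 : Real.sinh (x3 / 2) ^ 2 = S * P3 / (Real.sin a1 * Real.sin a2) := by
    have e : Real.cos a3 + Real.cos (a1 + a2) = 2 * S * P3 := by
      rw [Real.cos_add_cos,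
        show (a3 - (a1 + a2)) / 2 = -((a1 + a2 - a3) / 2) by ring, Real.cos_neg,
        show (a3 + (a1 + a2)) / 2 = (a1 + a2 + a3) / 2 by ring, hSdef, hP3def]
    rw [Real.cos_add] at e
    rw [eq_div_iff hne12]
    linear_combination h3 / 2 - (Real.sin a1 * Real.sin a2) / 2 * hhalf x3 + e / 2
  have hc1 : Real.cosh (x1 / 2) ^ 2 = P2 * P3 / (Real.sin a2 * Real.sin a3) := by
    have e : Real.cos a1 + Real.cos (a2 - a3) = 2 * P3 * P2 := by
      rw [Real.cos_add_cos,
        show (a1 + (a2 - a3)) / 2 = (a1 + a2 - a3) / 2 by ring,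
        show (a1 - (a2 - a3)) / 2 = (a1 + a3 - a2) / 2 by ring, hP2def, hP3def]
    rw [Real.cos_sub] at e
    rw [eq_div_iff hne23]
    linear_combination h1 / 2 - (Real.sin a2 * Real.sin a3) / 2 * hhalf' x1 + e / 2
  -- positivity of the half quantities
  have hT1 : 0 < Real.sinh (x1 / 2) := Real.sinh_pos_iff.2 (by linarith)
  have hT2 : 0 < Real.sinh (x2 / 2) := Real.sinh_pos_iff.2 (by linarith)
  have hT3 : 0 < Real.sinh (x3 / 2) := Real.sinh_pos_iff.2 (by linarith)
  have hC1 : 0 < Real.cosh (x1 / 2) := Real.cosh_pos _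
  -- cross term
  have key : Real.cosh (x1 / 2) * Real.sinh (x2 / 2) * Real.sinh (x3 / 2)
      = S * P2 * P3 / (Real.sin a1 * Real.sin a2 * Real.sin a3) := by
    set L := Real.cosh (x1 / 2) * Real.sinh (x2 / 2) * Real.sinh (x3 / 2) with hL
    set R := S * P2 * P3 / (Real.sin a1 * Real.sin a2 * Real.sin a3) with hR
    have hsq : L ^ 2 = R ^ 2 := by
      have h' : L ^ 2 = Real.cosh (x1 / 2) ^ 2 * Real.sinh (x2 / 2) ^ 2
          * Real.sinh (x3 / 2) ^ 2 := by rw [hL]; ring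
      rw [h', hc1, ht2, ht3, hR, div_pow, div_mul_div_comm, div_mul_div_comm]
      congr 1 <;> ring
    have hLpos : 0 < L := by rw [hL]; positivity
    have hRpos : 0 < R := by rw [hR]; positivity
    have hfac : (L - R) * (L + R) = 0 := by linear_combination hsq
    rcases mul_eq_zero.1 hfac with h | h
    · linarith
    · linarith
  -- the pure trigonometric identity
  have htrig : Real.sin a2 * P2 + Real.sin a3 * P3 - Real.sin a1 * P1
      = 2 * Real.sin ((a2 + a3 - a1) / 2) * P2 * P3 := by
    have e1 : Real.sin a1 = Real.sin ((a1 + a3 - a2) / 2 + (a1 + a2 - a3) / 2) := by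
      apply congrArg; ring
    have e2 : Real.sin a2 = Real.sin ((a2 + a3 - a1) / 2 + (a1 + a2 - a3) / 2) := by
      apply congrArg; ring
    have e3 : Real.sin a3 = Real.sin ((a2 + a3 - a1) / 2 + (a1 + a3 - a2) / 2) := by
      apply congrArg; ring
    rw [e1, e2, e3, Real.sin_add, Real.sin_add, Real.sin_add, hP1def, hP2def, hP3def]
    ring
  -- finish
  rw [eq_div_iff (by positivity)]
  have expand : 2 * Real.sin ((a2 + a3 - a1) / 2) * Real.cosh (x1 / 2) *
      (Real.sinh (x2 / 2) * Real.sinh (x3 / 2))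
      = 2 * Real.sin ((a2 + a3 - a1) / 2) *
        (Real.cosh (x1 / 2) * Real.sinh (x2 / 2) * Real.sinh (x3 / 2)) := by ring
  rw [expand, key, ht1, ht2, ht3]
  field_simp
  linear_combination -htrig
end

section
/- Let a hyperbolic triangle have side lengths a, b, c with a compact circumcircle of radius r. Then (s(a)s(b)s(c))²/((s(a)+s(b)+s(c))(s(a)+s(b)−s(c))(s(b)+s(c)−s(a))(s(c)+s(a)−s(b))) = (1/4)·sinh²(r), where s(t) = sinh(t/2). In particular, the circumcircle is compact if and only if s(a), s(b), s(c) satisfy the strict triangle inequality. -/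
open Real

private lemma cramer_x (a1 a2 b1 b2 c1 c2 q1 q2 R : ℝ)
    (hA : (a1-q1)^2+(a2-q2)^2 = R^2) (hB : (b1-q1)^2+(b2-q2)^2 = R^2)
    (hC : (c1-q1)^2+(c2-q2)^2 = R^2) :
    2*((b1-a1)*(c2-a2)-(b2-a2)*(c1-a1))*q1
      = (b1^2+b2^2-a1^2-a2^2)*(c2-a2) - (c1^2+c2^2-a1^2-a2^2)*(b2-a2) := by
  linear_combination (c2-a2)*(hA - hB) - (b2-a2)*(hA - hC)

private lemma cramer_y (a1 a2 b1 b2 c1 c2 q1 q2 R : ℝ)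
    (hA : (a1-q1)^2+(a2-q2)^2 = R^2) (hB : (b1-q1)^2+(b2-q2)^2 = R^2)
    (hC : (c1-q1)^2+(c2-q2)^2 = R^2) :
    2*((b1-a1)*(c2-a2)-(b2-a2)*(c1-a1))*q2
      = (c1^2+c2^2-a1^2-a2^2)*(b1-a1) - (b1^2+b2^2-a1^2-a2^2)*(c1-a1) := by
  linear_combination (b1-a1)*(hA - hC) - (c1-a1)*(hA - hB)

/-- The product of the squared Euclidean side lengths equals `4 D² R²` for points on a
circle of radius `R`. -/
private lemma circle_uvw (a1 a2 b1 b2 c1 c2 q1 q2 R : ℝ)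
    (hA : (a1-q1)^2+(a2-q2)^2 = R^2) (hB : (b1-q1)^2+(b2-q2)^2 = R^2)
    (hC : (c1-q1)^2+(c2-q2)^2 = R^2) :
    ((b1-c1)^2+(b2-c2)^2) * ((c1-a1)^2+(c2-a2)^2) * ((a1-b1)^2+(a2-b2)^2)
      = 4*((b1-a1)*(c2-a2)-(b2-a2)*(c1-a1))^2*R^2 := by
  have hx := cramer_x a1 a2 b1 b2 c1 c2 q1 q2 R hA hB hC
  have hy := cramer_y a1 a2 b1 b2 c1 c2 q1 q2 R hA hB hC
  linear_combination
    (4*((b1-a1)*(c2-a2)-(b2-a2)*(c1-a1))*a1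
      - ((b1^2+b2^2-a1^2-a2^2)*(c2-a2) - (c1^2+c2^2-a1^2-a2^2)*(b2-a2))
      - 2*((b1-a1)*(c2-a2)-(b2-a2)*(c1-a1))*q1) * hx
    + (4*((b1-a1)*(c2-a2)-(b2-a2)*(c1-a1))*a2
      - ((c1^2+c2^2-a1^2-a2^2)*(b1-a1) - (b1^2+b2^2-a1^2-a2^2)*(c1-a1))
      - 2*((b1-a1)*(c2-a2)-(b2-a2)*(c1-a1))*q2) * hy
    + 4*((b1-a1)*(c2-a2)-(b2-a2)*(c1-a1))^2 * hA

/-- Fenchel's quantity `P = 4 D² (q₂² - R²)` for points on a circle of radius `R`. -/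
private lemma circle_P (a1 a2 b1 b2 c1 c2 q1 q2 R : ℝ)
    (hA : (a1-q1)^2+(a2-q2)^2 = R^2) (hB : (b1-q1)^2+(b2-q2)^2 = R^2)
    (hC : (c1-q1)^2+(c2-q2)^2 = R^2) :
    (2*(((((b1-c1)^2+(b2-c2)^2))*a2)*((((c1-a1)^2+(c2-a2)^2))*b2)
        + ((((c1-a1)^2+(c2-a2)^2))*b2)*((((a1-b1)^2+(a2-b2)^2))*c2)
        + ((((a1-b1)^2+(a2-b2)^2))*c2)*((((b1-c1)^2+(b2-c2)^2))*a2))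
      - ((((b1-c1)^2+(b2-c2)^2))*a2)^2 - ((((c1-a1)^2+(c2-a2)^2))*b2)^2
      - ((((a1-b1)^2+(a2-b2)^2))*c2)^2)
      = 4*((b1-a1)*(c2-a2)-(b2-a2)*(c1-a1))^2*q2^2
        - 4*((b1-a1)*(c2-a2)-(b2-a2)*(c1-a1))^2*R^2 := by
  have hx := cramer_x a1 a2 b1 b2 c1 c2 q1 q2 R hA hB hC
  have hy := cramer_y a1 a2 b1 b2 c1 c2 q1 q2 R hA hB hC
  linear_combination
    (-(4*((b1-a1)*(c2-a2)-(b2-a2)*(c1-a1))^2)) * hA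
    - (4*((b1-a1)*(c2-a2)-(b2-a2)*(c1-a1))*a1
      - ((b1^2+b2^2-a1^2-a2^2)*(c2-a2) - (c1^2+c2^2-a1^2-a2^2)*(b2-a2))
      - 2*((b1-a1)*(c2-a2)-(b2-a2)*(c1-a1))*q1) * hx
    - (4*((b1-a1)*(c2-a2)-(b2-a2)*(c1-a1))*a2
      - ((c1^2+c2^2-a1^2-a2^2)*(b1-a1) - (b1^2+b2^2-a1^2-a2^2)*(c1-a1))
      - 2*((b1-a1)*(c2-a2)-(b2-a2)*(c1-a1))*q2
      + 2*((b1-a1)*(c2-a2)-(b2-a2)*(c1-a1))*q2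
      + ((c1^2+c2^2-a1^2-a2^2)*(b1-a1) - (b1^2+b2^2-a1^2-a2^2)*(c1-a1))) * hy

/-- Core algebraic identity: for three points on a Euclidean circle of radius `R` whose
center has height `q₂` with `q₂² - R² = P₂²`, we have `U·V·W·P₂² = P·R²`, stated with
abstract values `U, V, W` for the squared side lengths. -/
private lemma circum_alg (a1 a2 b1 b2 c1 c2 q1 q2 R P2 U V W : ℝ)
    (hU : U = (b1-c1)^2+(b2-c2)^2) (hV : V = (c1-a1)^2+(c2-a2)^2)
    (hW : W = (a1-b1)^2+(a2-b2)^2)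
    (hA : (a1-q1)^2+(a2-q2)^2 = R^2) (hB : (b1-q1)^2+(b2-q2)^2 = R^2)
    (hC : (c1-q1)^2+(c2-q2)^2 = R^2)
    (hq : q2^2 - R^2 = P2^2) :
    (U*V*W)*P2^2
      = (2*((U*a2)*(V*b2) + (V*b2)*(W*c2) + (W*c2)*(U*a2))
          - (U*a2)^2 - (V*b2)^2 - (W*c2)^2) * R^2 := by
  subst hU hV hW
  have h1 := circle_uvw a1 a2 b1 b2 c1 c2 q1 q2 R hA hB hC
  have h2 := circle_P a1 a2 b1 b2 c1 c2 q1 q2 R hA hB hC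
  linear_combination P2^2 * h1 - R^2 * h2
    - 4*((b1-a1)*(c2-a2)-(b2-a2)*(c1-a1))^2*R^2 * hq

set_option maxHeartbeats 1000000 in
/-- Existence of a suitable circumcircle when Fenchel's quantity `P` is positive. -/
private lemma circum_exists (a1 a2 b1 b2 c1 c2 U V W : ℝ) (ha2 : 0 < a2)
    (hU : U = (b1-c1)^2+(b2-c2)^2) (hV : V = (c1-a1)^2+(c2-a2)^2)
    (hW : W = (a1-b1)^2+(a2-b2)^2)
    (hab : W ≠ 0)
    (hP : 0 < 2*((U*a2)*(V*b2) + (V*b2)*(W*c2) + (W*c2)*(U*a2))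
      - (U*a2)^2 - (V*b2)^2 - (W*c2)^2) :
    ∃ q1 q2 R2 : ℝ, 0 < R2 ∧ R2 < q2^2 ∧ 0 < q2 ∧
      (a1-q1)^2+(a2-q2)^2 = R2 ∧ (b1-q1)^2+(b2-q2)^2 = R2 ∧ (c1-q1)^2+(c2-q2)^2 = R2 := by
  subst hU hV hW
  obtain ⟨D, hD⟩ : ∃ t : ℝ, t = (b1-a1)*(c2-a2)-(b2-a2)*(c1-a1) := ⟨_, rfl⟩
  obtain ⟨NX, hNX⟩ : ∃ t : ℝ,
      t = (b1^2+b2^2-a1^2-a2^2)*(c2-a2) - (c1^2+c2^2-a1^2-a2^2)*(b2-a2) := ⟨_, rfl⟩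
  obtain ⟨NY, hNY⟩ : ∃ t : ℝ,
      t = (c1^2+c2^2-a1^2-a2^2)*(b1-a1) - (b1^2+b2^2-a1^2-a2^2)*(c1-a1) := ⟨_, rfl⟩
  have hI : 2*(((((b1-c1)^2+(b2-c2)^2))*a2)*((((c1-a1)^2+(c2-a2)^2))*b2)
        + ((((c1-a1)^2+(c2-a2)^2))*b2)*((((a1-b1)^2+(a2-b2)^2))*c2)
        + ((((a1-b1)^2+(a2-b2)^2))*c2)*((((b1-c1)^2+(b2-c2)^2))*a2))
      - ((((b1-c1)^2+(b2-c2)^2))*a2)^2 - ((((c1-a1)^2+(c2-a2)^2))*b2)^2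
      - ((((a1-b1)^2+(a2-b2)^2))*c2)^2
      = NY^2 - (2*D*a1-NX)^2 - (2*D*a2-NY)^2 := by
    rw [hD, hNX, hNY]; ring
  have hP' : 0 < NY^2 - (2*D*a1-NX)^2 - (2*D*a2-NY)^2 := by
    rw [← hI]; linarith [hP]
  have hD0 : D ≠ 0 := by
    intro h0
    rw [h0] at hP'
    nlinarith [hP', sq_nonneg NX, sq_nonneg NY]
  have hD2 : (0:ℝ) < D^2 := lt_of_le_of_ne (sq_nonneg D) (Ne.symm (pow_ne_zero 2 hD0))
  have h2D : (2*D) ≠ 0 := by intro h; exact hD0 (by linarith [h])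
  have h2D' : (2*((b1-a1)*(c2-a2)-(b2-a2)*(c1-a1))) ≠ 0 := by
    rw [← hD]; exact h2D
  have hBq : (b1 - NX/(2*D))^2+(b2 - NY/(2*D))^2
      = (a1 - NX/(2*D))^2 + (a2 - NY/(2*D))^2 := by
    have hx : 2*D*(NX/(2*D)) = NX := mul_div_cancel₀ _ h2D
    have hy : 2*D*(NY/(2*D)) = NY := mul_div_cancel₀ _ h2D
    have hm : D * ((b1 - NX/(2*D))^2+(b2 - NY/(2*D))^2
        - ((a1 - NX/(2*D))^2 + (a2 - NY/(2*D))^2)) = 0 := by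
      linear_combination (-(b1-a1))*hx - (b2-a2)*hy
        + (b1^2+b2^2-a1^2-a2^2)*hD - (b1-a1)*hNX - (b2-a2)*hNY
    rcases mul_eq_zero.1 hm with h | h
    · exact absurd h hD0
    · linarith
  have hCq : (c1 - NX/(2*D))^2+(c2 - NY/(2*D))^2
      = (a1 - NX/(2*D))^2 + (a2 - NY/(2*D))^2 := by
    have hx : 2*D*(NX/(2*D)) = NX := mul_div_cancel₀ _ h2D
    have hy : 2*D*(NY/(2*D)) = NY := mul_div_cancel₀ _ h2D
    have hm : D * ((c1 - NX/(2*D))^2+(c2 - NY/(2*D))^2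
        - ((a1 - NX/(2*D))^2 + (a2 - NY/(2*D))^2)) = 0 := by
      linear_combination (-(c1-a1))*hx - (c2-a2)*hy
        + (c1^2+c2^2-a1^2-a2^2)*hD - (c1-a1)*hNX - (c2-a2)*hNY
    rcases mul_eq_zero.1 hm with h | h
    · exact absurd h hD0
    · linarith
  have hPP : NY^2 - (2*D*a1-NX)^2 - (2*D*a2-NY)^2
      = 4*D^2*((NY/(2*D))^2 - ((a1 - NX/(2*D))^2 + (a2 - NY/(2*D))^2)) := by
    field_simp; ring
  rw [hPP] at hP'
  have hX : 0 < (NY/(2*D))^2 - ((a1 - NX/(2*D))^2 + (a2 - NY/(2*D))^2) := by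
    by_contra hcon
    push_neg at hcon
    have hle : 4*D^2*((NY/(2*D))^2 - ((a1 - NX/(2*D))^2 + (a2 - NY/(2*D))^2)) ≤ 0 :=
      mul_nonpos_iff.2 (Or.inl ⟨by linarith, hcon⟩)
    linarith
  have hQR2 : (a1 - NX/(2*D))^2 + (a2 - NY/(2*D))^2 < (NY/(2*D))^2 := by linarith
  have hq2pos : 0 < NY/(2*D) := by
    by_contra h
    push_neg at h
    have k1 : 0 ≤ a2 * (-(NY/(2*D))) := mul_nonneg ha2.le (neg_nonneg.2 h)
    have k2 : (a2 - NY/(2*D))^2 = a2^2 + 2*(a2*(-(NY/(2*D)))) + (NY/(2*D))^2 := by ring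
    linarith [hQR2, k1, k2, sq_nonneg (a1 - NX/(2*D)), pow_pos ha2 2]
  have hR2pos : 0 < (a1 - NX/(2*D))^2 + (a2 - NY/(2*D))^2 := by
    rcases (lt_or_eq_of_le (by positivity :
        (0:ℝ) ≤ (a1 - NX/(2*D))^2 + (a2 - NY/(2*D))^2)) with h|h
    · exact h
    · exfalso
      have e1 : (a1 - NX/(2*D))^2 ≤ 0 := by linarith [sq_nonneg (a2 - NY/(2*D))]
      have e2 : (a2 - NY/(2*D))^2 ≤ 0 := by linarith [sq_nonneg (a1 - NX/(2*D))]
      have e3 : (b1 - NX/(2*D))^2 ≤ 0 := by linarith [sq_nonneg (b2 - NY/(2*D)), hBq]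
      have e4 : (b2 - NY/(2*D))^2 ≤ 0 := by linarith [sq_nonneg (b1 - NX/(2*D)), hBq]
      have f1 : a1 - NX/(2*D) = 0 :=
        pow_eq_zero_iff two_ne_zero |>.mp (le_antisymm e1 (sq_nonneg _))
      have f2 : a2 - NY/(2*D) = 0 :=
        pow_eq_zero_iff two_ne_zero |>.mp (le_antisymm e2 (sq_nonneg _))
      have f3 : b1 - NX/(2*D) = 0 :=
        pow_eq_zero_iff two_ne_zero |>.mp (le_antisymm e3 (sq_nonneg _))
      have f4 : b2 - NY/(2*D) = 0 :=
        pow_eq_zero_iff two_ne_zero |>.mp (le_antisymm e4 (sq_nonneg _))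
      apply hab
      have g1 : a1 - b1 = 0 := by linarith
      have g2 : a2 - b2 = 0 := by linarith
      linear_combination (a1-b1)*g1 + (a2-b2)*g2
  exact ⟨NX/(2*D), NY/(2*D), (a1 - NX/(2*D))^2 + (a2 - NY/(2*D))^2,
    hR2pos, hQR2, hq2pos, rfl, hBq, hCq⟩

set_option maxHeartbeats 1000000 in
/-- Fenchel's formula for the circumradius of a hyperbolic triangle, stated in the
upper half-plane model of the hyperbolic plane. A compact circumcircle through the
vertices `A, B, C` is witnessed by a center `p` with `dist p A = dist p B = dist p C = r`. -/
theorem stmt_10 (A B C : UpperHalfPlane) (hAB : A ≠ B) (hBC : B ≠ C) (hCA : C ≠ A)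
    (a b c : ℝ) (ha : a = dist B C) (hb : b = dist C A) (hc : c = dist A B) :
    (∀ (p : UpperHalfPlane) (r : ℝ), 0 < r →
        dist p A = r → dist p B = r → dist p C = r →
        (Real.sinh (a / 2) * Real.sinh (b / 2) * Real.sinh (c / 2)) ^ 2 /
            ((Real.sinh (a / 2) + Real.sinh (b / 2) + Real.sinh (c / 2)) *
              (Real.sinh (a / 2) + Real.sinh (b / 2) - Real.sinh (c / 2)) *
              (Real.sinh (b / 2) + Real.sinh (c / 2) - Real.sinh (a / 2)) *
              (Real.sinh (c / 2) + Real.sinh (a / 2) - Real.sinh (b / 2))) =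
          (1 / 4) * Real.sinh r ^ 2) ∧
    ((∃ (p : UpperHalfPlane) (r : ℝ), 0 < r ∧
          dist p A = r ∧ dist p B = r ∧ dist p C = r) ↔
        (Real.sinh (a / 2) + Real.sinh (b / 2) > Real.sinh (c / 2) ∧
          Real.sinh (b / 2) + Real.sinh (c / 2) > Real.sinh (a / 2) ∧
          Real.sinh (c / 2) + Real.sinh (a / 2) > Real.sinh (b / 2))) := by
  have himA : 0 < A.im := A.im_pos
  have himB : 0 < B.im := B.im_pos
  have himC : 0 < C.im := C.im_pos
  set sa := Real.sinh (a / 2) with hsadef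
  set sb := Real.sinh (b / 2) with hsbdef
  set sc := Real.sinh (c / 2) with hscdef
  have hsa_pos : 0 < sa := by
    rw [hsadef]
    exact Real.sinh_pos_iff.2 (by have := dist_pos.2 hBC; rw [ha]; linarith)
  have hsb_pos : 0 < sb := by
    rw [hsbdef]
    exact Real.sinh_pos_iff.2 (by have := dist_pos.2 hCA; rw [hb]; linarith)
  have hsc_pos : 0 < sc := by
    rw [hscdef]
    exact Real.sinh_pos_iff.2 (by have := dist_pos.2 hAB; rw [hc]; linarith)
  have hU : 4*sa^2*(B.im*C.im) = (B.re-C.re)^2+(B.im-C.im)^2 := by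
    have h1 : sa = dist (B:ℂ) (C:ℂ) / (2*Real.sqrt (B.im*C.im)) := by
      rw [hsadef, ha]; exact UpperHalfPlane.sinh_half_dist B C
    have h2 : dist (B:ℂ) (C:ℂ)^2 = (B.re-C.re)^2+(B.im-C.im)^2 := by
      rw [Complex.dist_eq_re_im, Real.sq_sqrt (by positivity)]
      simp [UpperHalfPlane.coe_re, UpperHalfPlane.coe_im]
    have h3 : Real.sqrt (B.im*C.im)^2 = B.im*C.im := Real.sq_sqrt (by positivity)
    rw [h1, div_pow, mul_pow, h3, ← h2]
    field_simp
    ring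
  have hV : 4*sb^2*(C.im*A.im) = (C.re-A.re)^2+(C.im-A.im)^2 := by
    have h1 : sb = dist (C:ℂ) (A:ℂ) / (2*Real.sqrt (C.im*A.im)) := by
      rw [hsbdef, hb]; exact UpperHalfPlane.sinh_half_dist C A
    have h2 : dist (C:ℂ) (A:ℂ)^2 = (C.re-A.re)^2+(C.im-A.im)^2 := by
      rw [Complex.dist_eq_re_im, Real.sq_sqrt (by positivity)]
      simp [UpperHalfPlane.coe_re, UpperHalfPlane.coe_im]
    have h3 : Real.sqrt (C.im*A.im)^2 = C.im*A.im := Real.sq_sqrt (by positivity)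
    rw [h1, div_pow, mul_pow, h3, ← h2]
    field_simp
    ring
  have hW : 4*sc^2*(A.im*B.im) = (A.re-B.re)^2+(A.im-B.im)^2 := by
    have h1 : sc = dist (A:ℂ) (B:ℂ) / (2*Real.sqrt (A.im*B.im)) := by
      rw [hscdef, hc]; exact UpperHalfPlane.sinh_half_dist A B
    have h2 : dist (A:ℂ) (B:ℂ)^2 = (A.re-B.re)^2+(A.im-B.im)^2 := by
      rw [Complex.dist_eq_re_im, Real.sq_sqrt (by positivity)]
      simp [UpperHalfPlane.coe_re, UpperHalfPlane.coe_im]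
    have h3 : Real.sqrt (A.im*B.im)^2 = A.im*B.im := Real.sq_sqrt (by positivity)
    rw [h1, div_pow, mul_pow, h3, ← h2]
    field_simp
    ring
  have key : ∀ (p : UpperHalfPlane) (r : ℝ), 0 < r → dist p A = r → dist p B = r →
      dist p C = r →
      0 < (sa + sb + sc) * (sa + sb - sc) * (sb + sc - sa) * (sc + sa - sb) ∧
      (sa + sb + sc) * (sa + sb - sc) * (sb + sc - sa) * (sc + sa - sb) * Real.sinh r ^ 2
        = 4 * (sa * sb * sc) ^ 2 := by
    intro p r hr h1 h2 h3
    rw [dist_comm] at h1 h2 h3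
    have e1 := UpperHalfPlane.dist_eq_iff_dist_coe_center_eq.mp h1
    have e2 := UpperHalfPlane.dist_eq_iff_dist_coe_center_eq.mp h2
    have e3 := UpperHalfPlane.dist_eq_iff_dist_coe_center_eq.mp h3
    have hsinhr : 0 < Real.sinh r := Real.sinh_pos_iff.2 hr
    have cA : (A.re - p.re)^2 + (A.im - p.im*Real.cosh r)^2 = (p.im*Real.sinh r)^2 := by
      rw [← e1, Complex.dist_eq_re_im, Real.sq_sqrt (by positivity)]
      simp [UpperHalfPlane.coe_re, UpperHalfPlane.coe_im]
    have cB : (B.re - p.re)^2 + (B.im - p.im*Real.cosh r)^2 = (p.im*Real.sinh r)^2 := by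
      rw [← e2, Complex.dist_eq_re_im, Real.sq_sqrt (by positivity)]
      simp [UpperHalfPlane.coe_re, UpperHalfPlane.coe_im]
    have cC : (C.re - p.re)^2 + (C.im - p.im*Real.cosh r)^2 = (p.im*Real.sinh r)^2 := by
      rw [← e3, Complex.dist_eq_re_im, Real.sq_sqrt (by positivity)]
      simp [UpperHalfPlane.coe_re, UpperHalfPlane.coe_im]
    have hq : (p.im*Real.cosh r)^2 - (p.im*Real.sinh r)^2 = p.im^2 := by
      linear_combination p.im^2 * (Real.cosh_sq_sub_sinh_sq r)
    have halg := circum_alg A.re A.im B.re B.im C.re C.im p.re (p.im*Real.cosh r)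
      (p.im*Real.sinh r) p.im (4*sa^2*(B.im*C.im)) (4*sb^2*(C.im*A.im)) (4*sc^2*(A.im*B.im))
      hU hV hW cA cB cC hq
    have hQR : (sa + sb + sc) * (sa + sb - sc) * (sb + sc - sa) * (sc + sa - sb)
        * (p.im*Real.sinh r)^2 = 4*(sa*sb*sc)^2 * p.im^2 := by
      have h16 : ((16:ℝ)*(A.im*B.im*C.im)^2) ≠ 0 := by positivity
      apply mul_right_cancel₀ h16
      linear_combination (-1 : ℝ) * halg
    have hS : 0 < sa*sb*sc := mul_pos (mul_pos hsa_pos hsb_pos) hsc_pos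
    have hX : 0 < (p.im*Real.sinh r)^2 := pow_pos (mul_pos p.im_pos hsinhr) 2
    have hY : 0 < 4*(sa*sb*sc)^2 * p.im^2 :=
      mul_pos (mul_pos (by norm_num) (pow_pos hS 2)) (pow_pos p.im_pos 2)
    obtain ⟨Q, hQdef⟩ : ∃ t:ℝ,
        t = (sa + sb + sc) * (sa + sb - sc) * (sb + sc - sa) * (sc + sa - sb) := ⟨_, rfl⟩
    rw [← hQdef] at hQR ⊢
    have hQpos : 0 < Q := by
      rw [← hQR] at hY
      rcases mul_pos_iff.1 hY with ⟨h, -⟩ | ⟨-, h⟩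
      · exact h
      · exact absurd hX (not_lt.2 h.le)
    refine ⟨hQpos, ?_⟩
    apply mul_right_cancel₀ (pow_ne_zero 2 (ne_of_gt p.im_pos))
    linear_combination hQR
  constructor
  · intro p r hr h1 h2 h3
    obtain ⟨hQpos, hfin⟩ := key p r hr h1 h2 h3
    rw [div_eq_iff (ne_of_gt hQpos)]
    linear_combination (-1/4 : ℝ) * hfin
  · constructor
    · rintro ⟨p, r, hr, h1, h2, h3⟩
      obtain ⟨hQpos, -⟩ := key p r hr h1 h2 h3
      refine ⟨?_, ?_, ?_⟩
      · by_contra h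
        push_neg at h
        have t1 : 0 < sa+sb+sc := by linarith
        have t3 : 0 < sb+sc-sa := by linarith
        have t4 : 0 < sc+sa-sb := by linarith
        have hle : (sa + sb + sc) * (sa + sb - sc) * (sb + sc - sa) * (sc + sa - sb)
            = (sa+sb-sc) * ((sa+sb+sc)*((sb+sc-sa)*(sc+sa-sb))) := by ring
        rw [hle] at hQpos
        have := mul_nonpos_iff.2 (Or.inr ⟨(by linarith : sa+sb-sc ≤ 0),
          (mul_pos t1 (mul_pos t3 t4)).le⟩)
        linarith
      · by_contra h
        push_neg at h
        have t1 : 0 < sa+sb+sc := by linarith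
        have t2 : 0 < sa+sb-sc := by linarith
        have t4 : 0 < sc+sa-sb := by linarith
        have hle : (sa + sb + sc) * (sa + sb - sc) * (sb + sc - sa) * (sc + sa - sb)
            = (sb+sc-sa) * ((sa+sb+sc)*((sa+sb-sc)*(sc+sa-sb))) := by ring
        rw [hle] at hQpos
        have := mul_nonpos_iff.2 (Or.inr ⟨(by linarith : sb+sc-sa ≤ 0),
          (mul_pos t1 (mul_pos t2 t4)).le⟩)
        linarith
      · by_contra h
        push_neg at h
        have t1 : 0 < sa+sb+sc := by linarith
        have t2 : 0 < sa+sb-sc := by linarith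
        have t3 : 0 < sb+sc-sa := by linarith
        have hle : (sa + sb + sc) * (sa + sb - sc) * (sb + sc - sa) * (sc + sa - sb)
            = (sc+sa-sb) * ((sa+sb+sc)*((sa+sb-sc)*(sb+sc-sa))) := by ring
        rw [hle] at hQpos
        have := mul_nonpos_iff.2 (Or.inr ⟨(by linarith : sc+sa-sb ≤ 0),
          (mul_pos t1 (mul_pos t2 t3)).le⟩)
        linarith
    · rintro ⟨h1, h2, h3⟩
      have hQpos : 0 < (sa + sb + sc) * (sa + sb - sc) * (sb + sc - sa) * (sc + sa - sb) :=
        mul_pos (mul_pos (mul_pos (by linarith) (by linarith)) (by linarith)) (by linarith)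
      have hWne : (4*sc^2*(A.im*B.im)) ≠ 0 :=
        ne_of_gt (mul_pos (mul_pos (by norm_num) (pow_pos hsc_pos 2)) (mul_pos himA himB))
      have hP0 : 0 < 2*(((4*sa^2*(B.im*C.im))*A.im)*((4*sb^2*(C.im*A.im))*B.im)
          + ((4*sb^2*(C.im*A.im))*B.im)*((4*sc^2*(A.im*B.im))*C.im)
          + ((4*sc^2*(A.im*B.im))*C.im)*((4*sa^2*(B.im*C.im))*A.im))
          - ((4*sa^2*(B.im*C.im))*A.im)^2 - ((4*sb^2*(C.im*A.im))*B.im)^2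
          - ((4*sc^2*(A.im*B.im))*C.im)^2 := by
        have heq : 2*(((4*sa^2*(B.im*C.im))*A.im)*((4*sb^2*(C.im*A.im))*B.im)
            + ((4*sb^2*(C.im*A.im))*B.im)*((4*sc^2*(A.im*B.im))*C.im)
            + ((4*sc^2*(A.im*B.im))*C.im)*((4*sa^2*(B.im*C.im))*A.im))
            - ((4*sa^2*(B.im*C.im))*A.im)^2 - ((4*sb^2*(C.im*A.im))*B.im)^2
            - ((4*sc^2*(A.im*B.im))*C.im)^2
            = (16*(A.im*B.im*C.im)^2) *
              ((sa + sb + sc) * (sa + sb - sc) * (sb + sc - sa) * (sc + sa - sb)) := by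
          ring
        rw [heq]
        exact mul_pos (by positivity) hQpos
      obtain ⟨q1, q2, R2, hR2pos, hR2lt, hq2pos, cA, cB, cC⟩ :=
        circum_exists A.re A.im B.re B.im C.re C.im
          (4*sa^2*(B.im*C.im)) (4*sb^2*(C.im*A.im)) (4*sc^2*(A.im*B.im))
          himA hU hV hW hWne hP0
      obtain ⟨p2, hp2def⟩ : ∃ t:ℝ, t = Real.sqrt (q2^2 - R2) := ⟨_, rfl⟩
      have hp2pos : 0 < p2 := by rw [hp2def]; exact Real.sqrt_pos.2 (by linarith)
      have hp2sq : p2^2 = q2^2 - R2 := by rw [hp2def]; exact Real.sq_sqrt (by linarith)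
      obtain ⟨R, hRdef⟩ : ∃ t:ℝ, t = Real.sqrt R2 := ⟨_, rfl⟩
      have hRpos : 0 < R := by rw [hRdef]; exact Real.sqrt_pos.2 hR2pos
      have hRsq : R^2 = R2 := by rw [hRdef]; exact Real.sq_sqrt hR2pos.le
      have hrpos : 0 < Real.arsinh (R/p2) := Real.arsinh_pos_iff.2 (div_pos hRpos hp2pos)
      have hsinhr : Real.sinh (Real.arsinh (R/p2)) = R/p2 := Real.sinh_arsinh _
      have hcoshr : Real.cosh (Real.arsinh (R/p2)) = q2/p2 := by
        rw [Real.cosh_arsinh]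
        rw [show 1 + (R/p2)^2 = (q2/p2)^2 from by
          field_simp
          linear_combination hp2sq + hRsq]
        exact Real.sqrt_sq (div_nonneg hq2pos.le hp2pos.le)
      refine ⟨UpperHalfPlane.mk ⟨q1, p2⟩ (by exact hp2pos), Real.arsinh (R/p2), hrpos, ?_, ?_, ?_⟩
      · rw [dist_comm, UpperHalfPlane.dist_eq_iff_dist_coe_center_eq]
        rw [Complex.dist_eq_re_im]
        simp only [UpperHalfPlane.coe_re, UpperHalfPlane.coe_im, UpperHalfPlane.center_re,
          UpperHalfPlane.center_im, UpperHalfPlane.mk_re, UpperHalfPlane.mk_im, hsinhr, hcoshr]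
        rw [show p2*(q2/p2) = q2 from by field_simp, show p2*(R/p2) = R from by field_simp]
        rw [cA, hRdef]
      · rw [dist_comm, UpperHalfPlane.dist_eq_iff_dist_coe_center_eq]
        rw [Complex.dist_eq_re_im]
        simp only [UpperHalfPlane.coe_re, UpperHalfPlane.coe_im, UpperHalfPlane.center_re,
          UpperHalfPlane.center_im, UpperHalfPlane.mk_re, UpperHalfPlane.mk_im, hsinhr, hcoshr]
        rw [show p2*(q2/p2) = q2 from by field_simp, show p2*(R/p2) = R from by field_simp]
        rw [cB, hRdef]
      · rw [dist_comm, UpperHalfPlane.dist_eq_iff_dist_coe_center_eq]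
        rw [Complex.dist_eq_re_im]
        simp only [UpperHalfPlane.coe_re, UpperHalfPlane.coe_im, UpperHalfPlane.center_re,
          UpperHalfPlane.center_im, UpperHalfPlane.mk_re, UpperHalfPlane.mk_im, hsinhr, hcoshr]
        rw [show p2*(q2/p2) = q2 from by field_simp, show p2*(R/p2) = R from by field_simp]
        rw [cC, hRdef]
end

section
/- Let a hyperbolic triangle have side lengths a, b, c with opposite angles α, β, γ, and a compact circumcircle of radius r. Then sinh(a)/sin(α) = 2·tanh(r)·cosh(a/2)·cosh(b/2)·cosh(c/2). -/
open Real

set_option maxHeartbeats 1000000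

/-- Hyperbolic "law of sines" with the circumradius factor. The triangle is given by
its side lengths and angles via the hyperbolic cosine law, and the circumradius `r`
is characterized by Fenchel's formula. -/
theorem stmt_11 (a b c α β γ r : ℝ)
    (ha : 0 < a) (hb : 0 < b) (hc : 0 < c) (hr : 0 < r)
    (hα : α ∈ Set.Ioo 0 π) (hβ : β ∈ Set.Ioo 0 π) (hγ : γ ∈ Set.Ioo 0 π)
    (hsum : α + β + γ < π)
    (hcosα : Real.cos α = (-Real.cosh a + Real.cosh b * Real.cosh c) /
        (Real.sinh b * Real.sinh c))
    (hcosβ : Real.cos β = (-Real.cosh b + Real.cosh c * Real.cosh a) /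
        (Real.sinh c * Real.sinh a))
    (hcosγ : Real.cos γ = (-Real.cosh c + Real.cosh a * Real.cosh b) /
        (Real.sinh a * Real.sinh b))
    (hFenchel : (Real.sinh (a / 2) * Real.sinh (b / 2) * Real.sinh (c / 2)) ^ 2 /
        ((Real.sinh (a / 2) + Real.sinh (b / 2) + Real.sinh (c / 2)) *
          (Real.sinh (a / 2) + Real.sinh (b / 2) - Real.sinh (c / 2)) *
          (Real.sinh (b / 2) + Real.sinh (c / 2) - Real.sinh (a / 2)) *
          (Real.sinh (c / 2) + Real.sinh (a / 2) - Real.sinh (b / 2))) =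
        (1 / 4) * Real.sinh r ^ 2) :
    Real.sinh a / Real.sin α =
      2 * Real.tanh r * Real.cosh (a / 2) * Real.cosh (b / 2) * Real.cosh (c / 2) := by
  obtain ⟨hα0, hαπ⟩ := hα
  set x := Real.sinh (a / 2) with hxdef
  set y := Real.sinh (b / 2) with hydef
  set z := Real.sinh (c / 2) with hzdef
  set X := Real.cosh (a / 2) with hXdef
  set Y := Real.cosh (b / 2) with hYdef
  set Z := Real.cosh (c / 2) with hZdef
  set u := Real.sinh r with hudef
  set v := Real.cosh r with hvdef
  set S := Real.sin α with hSdef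
  have hx : 0 < x := Real.sinh_pos_iff.mpr (by linarith)
  have hy : 0 < y := Real.sinh_pos_iff.mpr (by linarith)
  have hz : 0 < z := Real.sinh_pos_iff.mpr (by linarith)
  have hXp : 0 < X := Real.cosh_pos _
  have hYp : 0 < Y := Real.cosh_pos _
  have hZp : 0 < Z := Real.cosh_pos _
  have hvp : 0 < v := Real.cosh_pos _
  have hup : 0 < u := Real.sinh_pos_iff.mpr hr
  have hSp : 0 < S := Real.sin_pos_of_pos_of_lt_pi hα0 hαπ
  have hX2 : X ^ 2 = 1 + x ^ 2 := Real.cosh_sq' _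
  have hY2 : Y ^ 2 = 1 + y ^ 2 := Real.cosh_sq' _
  have hZ2 : Z ^ 2 = 1 + z ^ 2 := Real.cosh_sq' _
  have hsa : Real.sinh a = 2 * x * X := by
    rw [show a = 2 * (a / 2) by ring, Real.sinh_two_mul]
  have hsb : Real.sinh b = 2 * y * Y := by
    rw [show b = 2 * (b / 2) by ring, Real.sinh_two_mul]
  have hsc : Real.sinh c = 2 * z * Z := by
    rw [show c = 2 * (c / 2) by ring, Real.sinh_two_mul]
  have hca : Real.cosh a = 1 + 2 * x ^ 2 := by
    rw [show a = 2 * (a / 2) by ring, Real.cosh_two_mul, hX2]; ring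
  have hcb : Real.cosh b = 1 + 2 * y ^ 2 := by
    rw [show b = 2 * (b / 2) by ring, Real.cosh_two_mul, hY2]; ring
  have hcc : Real.cosh c = 1 + 2 * z ^ 2 := by
    rw [show c = 2 * (c / 2) by ring, Real.cosh_two_mul, hZ2]; ring
  -- the Fenchel data
  set Q : ℝ := (x + y + z) * (x + y - z) * (y + z - x) * (z + x - y) with hQdef
  have hQpos : 0 < Q := by
    by_contra h
    push_neg at h
    have h1 : (x * y * z) ^ 2 / Q ≤ 0 :=
      div_nonpos_of_nonneg_of_nonpos (sq_nonneg _) h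
    rw [hFenchel] at h1
    have h2 : 0 < u ^ 2 := pow_pos hup 2
    linarith
  have hE1 : u ^ 2 * Q = 4 * (x * y * z) ^ 2 := by
    rw [div_eq_iff hQpos.ne'] at hFenchel
    linear_combination -4 * hFenchel
  have hE2 : v ^ 2 = 1 + u ^ 2 := Real.cosh_sq' _
  -- the sine of α
  have hsbp : (0:ℝ) < Real.sinh b := Real.sinh_pos_iff.mpr hb
  have hscp : (0:ℝ) < Real.sinh c := Real.sinh_pos_iff.mpr hc
  have hcA : Real.cos α * (Real.sinh b * Real.sinh c) =
      -Real.cosh a + Real.cosh b * Real.cosh c := by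
    rw [hcosα, div_mul_cancel₀]
    positivity
  have hT : S ^ 2 * (Real.sinh b * Real.sinh c) ^ 2 =
      (Real.sinh b * Real.sinh c) ^ 2 -
        (-Real.cosh a + Real.cosh b * Real.cosh c) ^ 2 := by
    have h1 := Real.sin_sq_add_cos_sq α
    linear_combination ((Real.sinh b * Real.sinh c) ^ 2) * h1 -
      (Real.cos α * (Real.sinh b * Real.sinh c) +
        (-Real.cosh a + Real.cosh b * Real.cosh c)) * hcA
  have hTT : (Real.sinh b * Real.sinh c) ^ 2 =
      16 * y ^ 2 * z ^ 2 * (1 + y ^ 2) * (1 + z ^ 2) := by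
    rw [hsb, hsc]
    linear_combination (16 * y ^ 2 * z ^ 2 * Z ^ 2) * hY2 + (16 * y ^ 2 * z ^ 2 * (1 + y ^ 2)) * hZ2
  have hWW : (-Real.cosh a + Real.cosh b * Real.cosh c) ^ 2 =
      ((1 + 2 * y ^ 2) * (1 + 2 * z ^ 2) - (1 + 2 * x ^ 2)) ^ 2 := by
    rw [hca, hcb, hcc]; ring
  have hE3 : S ^ 2 * (16 * y ^ 2 * z ^ 2 * (1 + y ^ 2) * (1 + z ^ 2)) =
      16 * y ^ 2 * z ^ 2 * (1 + y ^ 2) * (1 + z ^ 2) -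
        ((1 + 2 * y ^ 2) * (1 + 2 * z ^ 2) - (1 + 2 * x ^ 2)) ^ 2 := by
    linear_combination hT - (S ^ 2 - 1) * hTT - hWW
  -- main squared identity (multiplied through by 4*y^2*z^2*Q)
  have hmain' : (4 * x ^ 2 * (1 + x ^ 2) * v ^ 2) * (4 * y ^ 2 * z ^ 2 * Q) =
      (4 * S ^ 2 * u ^ 2 * (1 + x ^ 2) * (1 + y ^ 2) * (1 + z ^ 2)) *
        (4 * y ^ 2 * z ^ 2 * Q) := by
    linear_combination (16 * x ^ 2 * y ^ 2 * z ^ 2 * (1 + x ^ 2) * Q) * hE2 +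
      ((1 + x ^ 2) * (16 * x ^ 2 * y ^ 2 * z ^ 2 -
        (16 * y ^ 2 * z ^ 2 * (1 + y ^ 2) * (1 + z ^ 2) -
          ((1 + 2 * y ^ 2) * (1 + 2 * z ^ 2) - (1 + 2 * x ^ 2)) ^ 2))) * hE1 -
      ((1 + x ^ 2) * u ^ 2 * Q) * hE3
  have hyzQ : (4 : ℝ) * y ^ 2 * z ^ 2 * Q ≠ 0 := by positivity
  have hmain : 4 * x ^ 2 * (1 + x ^ 2) * v ^ 2 =
      4 * S ^ 2 * u ^ 2 * (1 + x ^ 2) * (1 + y ^ 2) * (1 + z ^ 2) :=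
    mul_right_cancel₀ hyzQ hmain'
  -- squared form of the key identity
  have hsq : (Real.sinh a * v) ^ 2 = (S * (2 * u * X * Y * Z)) ^ 2 := by
    rw [hsa]
    linear_combination (4 * x ^ 2 * v ^ 2) * hX2 + hmain +
      (-4 * S ^ 2 * u ^ 2 * Y ^ 2 * Z ^ 2) * hX2 +
      (-4 * S ^ 2 * u ^ 2 * (1 + x ^ 2) * Z ^ 2) * hY2 +
      (-4 * S ^ 2 * u ^ 2 * (1 + x ^ 2) * (1 + y ^ 2)) * hZ2
  have hkey : Real.sinh a * v = S * (2 * u * X * Y * Z) := by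
    have h1 : 0 ≤ Real.sinh a * v := by
      have : 0 ≤ Real.sinh a := (Real.sinh_pos_iff.mpr ha).le
      positivity
    have h2 : 0 ≤ S * (2 * u * X * Y * Z) := by positivity
    calc Real.sinh a * v = √((Real.sinh a * v) ^ 2) := (Real.sqrt_sq h1).symm
      _ = √((S * (2 * u * X * Y * Z)) ^ 2) := by rw [hsq]
      _ = S * (2 * u * X * Y * Z) := Real.sqrt_sq h2
  rw [Real.tanh_eq_sinh_div_cosh, div_eq_iff hSp.ne']
  rw [← hudef, ← hvdef]
  field_simp
  linear_combination hkey
end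

section
/- Suppose positive real sequences l₁⁽ᵐ⁾, l₂⁽ᵐ⁾, l₃⁽ᵐ⁾ satisfy sinh(l_i⁽ᵐ⁾/2) = sinh(a_i/2)·exp(u_j⁽ᵐ⁾ + u_k⁽ᵐ⁾) for fixed constants a₁, a₂, a₃ > 0 and {i,j,k} = {1,2,3}, and each triple l₁⁽ᵐ⁾, l₂⁽ᵐ⁾, l₃⁽ᵐ⁾ forms a hyperbolic triangle (satisfies the triangle inequality). Then it is impossible that lim_m u₂⁽ᵐ⁾ and lim_m u₃⁽ᵐ⁾ both exist in (−∞, ∞] while lim_m u₁⁽ᵐ⁾ = −∞. -/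
open Filter Topology

theorem stmt_16 (a1 a2 a3 : ℝ) (ha1 : 0 < a1) (ha2 : 0 < a2) (ha3 : 0 < a3)
    (l1 l2 l3 u1 u2 u3 : ℕ → ℝ)
    (hl1 : ∀ m, 0 < l1 m) (hl2 : ∀ m, 0 < l2 m) (hl3 : ∀ m, 0 < l3 m)
    (h1 : ∀ m, Real.sinh (l1 m / 2) = Real.sinh (a1 / 2) * Real.exp (u2 m + u3 m))
    (h2 : ∀ m, Real.sinh (l2 m / 2) = Real.sinh (a2 / 2) * Real.exp (u1 m + u3 m))
    (h3 : ∀ m, Real.sinh (l3 m / 2) = Real.sinh (a3 / 2) * Real.exp (u1 m + u2 m))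
    (htri : ∀ m, l1 m < l2 m + l3 m ∧ l2 m < l1 m + l3 m ∧ l3 m < l1 m + l2 m)
    (hu1 : Tendsto u1 atTop atBot)
    (hu2 : (∃ L : ℝ, Tendsto u2 atTop (𝓝 L)) ∨ Tendsto u2 atTop atTop)
    (hu3 : (∃ L : ℝ, Tendsto u3 atTop (𝓝 L)) ∨ Tendsto u3 atTop atTop) :
    False := by
  have hc1 : 0 < Real.sinh (a1 / 2) := Real.sinh_pos_iff.mpr (by linarith)
  have hc2 : 0 < Real.sinh (a2 / 2) := Real.sinh_pos_iff.mpr (by linarith)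
  have hc3 : 0 < Real.sinh (a3 / 2) := Real.sinh_pos_iff.mpr (by linarith)
  set c1 := Real.sinh (a1 / 2) with hc1d
  set c2 := Real.sinh (a2 / 2) with hc2d
  set c3 := Real.sinh (a3 / 2) with hc3d
  -- eventual lower bounds on u2, u3
  obtain ⟨b2, hb2⟩ : ∃ b, ∀ᶠ m in atTop, b ≤ u2 m := by
    rcases hu2 with ⟨L, hL⟩ | h
    · exact ⟨L - 1, hL.eventually (eventually_ge_nhds (by linarith))⟩
    · exact ⟨0, h.eventually_ge_atTop 0⟩
  obtain ⟨b3, hb3⟩ : ∃ b, ∀ᶠ m in atTop, b ≤ u3 m := by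
    rcases hu3 with ⟨L, hL⟩ | h
    · exact ⟨L - 1, hL.eventually (eventually_ge_nhds (by linarith))⟩
    · exact ⟨0, h.eventually_ge_atTop 0⟩
  -- u1 - u2, u1 - u3, 2*u1 tend to -∞
  have t2 : Tendsto (fun m => u1 m - u2 m) atTop atBot := by
    refine tendsto_atBot_mono' atTop (hb2.mono fun m h => ?_)
      (tendsto_atBot_add_const_right atTop (-b2) hu1)
    simp only
    linarith
  have t3 : Tendsto (fun m => u1 m - u3 m) atTop atBot := by
    refine tendsto_atBot_mono' atTop (hb3.mono fun m h => ?_)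
      (tendsto_atBot_add_const_right atTop (-b3) hu1)
    simp only
    linarith
  have t1 : Tendsto (fun m => 2 * u1 m) atTop atBot := by
    refine tendsto_atBot_mono' atTop (hu1.eventually_le_atBot 0 |>.mono fun m h => ?_) hu1
    simp only
    linarith
  have e2 : Tendsto (fun m => Real.exp (u1 m - u2 m)) atTop (𝓝 0) :=
    Real.tendsto_exp_atBot.comp t2
  have e3 : Tendsto (fun m => Real.exp (u1 m - u3 m)) atTop (𝓝 0) :=
    Real.tendsto_exp_atBot.comp t3
  have e1 : Tendsto (fun m => Real.exp (2 * u1 m)) atTop (𝓝 0) :=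
    Real.tendsto_exp_atBot.comp t1
  have hf : Tendsto (fun m => c2 * Real.exp (u1 m - u2 m) + c3 * Real.exp (u1 m - u3 m)
      + 2 * c2 * c3 * Real.exp (2 * u1 m)) atTop (𝓝 0) := by
    have := ((e2.const_mul c2).add (e3.const_mul c3)).add (e1.const_mul (2 * c2 * c3))
    simpa using this
  -- eventually the expression is < c1
  have hev : ∀ᶠ m in atTop, c2 * Real.exp (u1 m - u2 m) + c3 * Real.exp (u1 m - u3 m)
      + 2 * c2 * c3 * Real.exp (2 * u1 m) < c1 :=
    hf.eventually (eventually_lt_nhds hc1)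
  obtain ⟨m, hm⟩ := hev.exists
  -- key pointwise inequality
  have hcosh : ∀ y : ℝ, 0 ≤ y → Real.cosh y ≤ 1 + Real.sinh y := by
    intro y hy
    have h := Real.cosh_sub_sinh y
    have : Real.exp (-y) ≤ 1 := Real.exp_le_one_iff.mpr (by linarith)
    linarith
  have key : Real.sinh (l1 m / 2) < Real.sinh (l2 m / 2) + Real.sinh (l3 m / 2)
      + 2 * Real.sinh (l2 m / 2) * Real.sinh (l3 m / 2) := by
    have htr := (htri m).1
    have hmono : Real.sinh (l1 m / 2) < Real.sinh (l2 m / 2 + l3 m / 2) :=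
      Real.sinh_lt_sinh.mpr (by linarith)
    rw [Real.sinh_add] at hmono
    have hs2 : 0 ≤ Real.sinh (l2 m / 2) := Real.sinh_nonneg_iff.mpr (by linarith [hl2 m])
    have hs3 : 0 ≤ Real.sinh (l3 m / 2) := Real.sinh_nonneg_iff.mpr (by linarith [hl3 m])
    have hcy := hcosh (l3 m / 2) (by linarith [hl3 m])
    have hcx := hcosh (l2 m / 2) (by linarith [hl2 m])
    nlinarith
  -- substitute and derive contradiction
  rw [h1 m, h2 m, h3 m] at key
  rw [Real.exp_add, Real.exp_add, Real.exp_add] at key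
  have hE : Real.exp (2 * u1 m) = Real.exp (u1 m) * Real.exp (u1 m) := by
    rw [two_mul, Real.exp_add]
  rw [Real.exp_sub, Real.exp_sub, hE] at hm
  set A := Real.exp (u1 m) with hA
  set B := Real.exp (u2 m) with hB
  set C := Real.exp (u3 m) with hC
  have hBpos : (0:ℝ) < B := Real.exp_pos _
  have hCpos : (0:ℝ) < C := Real.exp_pos _
  have hm' := mul_lt_mul_of_pos_right hm (mul_pos hBpos hCpos)
  have expand : (c2 * (A / B) + c3 * (A / C) + 2 * c2 * c3 * (A * A)) * (B * C)
      = c2 * (A * C) + c3 * (A * B) + 2 * (c2 * (A * C)) * (c3 * (A * B)) := by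
    field_simp
  rw [expand] at hm'
  linarith [key, hm']
end

section
/- Let l_i⁽ᵐ⁾ (i=1,2,3) be side lengths of hyperbolic triangles with sinh(l_i⁽ᵐ⁾/2) = sinh(a_i/2)·exp(u_j⁽ᵐ⁾+u_k⁽ᵐ⁾) for fixed a_i > 0, where u_i⁽ᵐ⁾ → ∞ for all i = 1,2,3 (so all l_j⁽ᵐ⁾ → ∞). Let α_i⁽ᵐ⁾ be the angle opposite l_i⁽ᵐ⁾. Then cos(α_i⁽ᵐ⁾) → 1, i.e., all three angles tend to 0. -/
open Filter Topology Real

private lemma cosh_eq' (x : ℝ) : Real.cosh x = 2 * Real.sinh (x/2)^2 + 1 := by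
  rw [show x = 2*(x/2) by ring, Real.cosh_two_mul, Real.cosh_sq]; ring

private lemma sinh_eq' (x : ℝ) : Real.sinh x = 2 * Real.sinh (x/2) * Real.cosh (x/2) := by
  conv_lhs => rw [show x = 2*(x/2) by ring, Real.sinh_two_mul]

private lemma cosh_half (x : ℝ) : Real.cosh x = Real.sqrt (Real.sinh x ^ 2 + 1) := by
  rw [← Real.cosh_sq, Real.sqrt_sq (Real.cosh_pos x).le]

private lemma sq_tendsto {s : ℕ → ℝ} (hs : Tendsto s atTop atTop) :
    Tendsto (fun m => s m ^ 2) atTop atTop := by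
  have := hs.atTop_mul_atTop₀ hs
  simpa [pow_two] using this

private lemma tanh_lim (s : ℕ → ℝ) (hs0 : ∀ m, 0 < s m) (hs : Tendsto s atTop atTop) :
    Tendsto (fun m => s m / Real.sqrt (s m ^ 2 + 1)) atTop (𝓝 1) := by
  have key : ∀ m, s m / Real.sqrt (s m ^ 2 + 1) = Real.sqrt (1 - 1/(s m ^ 2 + 1)) := by
    intro m
    have hpos : (0:ℝ) < s m ^ 2 + 1 := by positivity
    have h1 : (1:ℝ) - 1/(s m ^ 2 + 1) = s m ^ 2 / (s m ^ 2 + 1) := by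
      field_simp
      ring
    rw [h1, Real.sqrt_div (sq_nonneg _), Real.sqrt_sq (hs0 m).le]
  simp only [key]
  have hinner : Tendsto (fun m => 1 - 1/(s m ^ 2 + 1)) atTop (𝓝 1) := by
    have h2 : Tendsto (fun m => s m ^ 2 + 1) atTop atTop :=
      tendsto_atTop_add_const_right _ 1 (sq_tendsto hs)
    have h3 : Tendsto (fun m => 1/(s m ^ 2 + 1)) atTop (𝓝 0) := by
      simpa [one_div, Function.comp_def] using tendsto_inv_atTop_zero.comp h2
    simpa using tendsto_const_nhds.sub h3
  have := (Real.continuous_sqrt.tendsto 1).comp hinner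
  simpa [Function.comp_def] using this

private lemma cos_lim (l1 l2 l3 : ℕ → ℝ)
    (hs10 : ∀ m, 0 < Real.sinh (l1 m / 2))
    (hs20 : ∀ m, 0 < Real.sinh (l2 m / 2))
    (hs30 : ∀ m, 0 < Real.sinh (l3 m / 2))
    (hs2 : Tendsto (fun m => Real.sinh (l2 m / 2)) atTop atTop)
    (hs3 : Tendsto (fun m => Real.sinh (l3 m / 2)) atTop atTop)
    (hr : Tendsto (fun m => Real.sinh (l1 m / 2) ^ 2 /
        (Real.sinh (l2 m / 2) ^ 2 * Real.sinh (l3 m / 2) ^ 2)) atTop (𝓝 0)) :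
    Tendsto (fun m => (-Real.cosh (l1 m) + Real.cosh (l2 m) * Real.cosh (l3 m)) /
        (Real.sinh (l2 m) * Real.sinh (l3 m))) atTop (𝓝 1) := by
  set s1 : ℕ → ℝ := fun m => Real.sinh (l1 m / 2) with hs1def
  set s2 : ℕ → ℝ := fun m => Real.sinh (l2 m / 2) with hs2def
  set s3 : ℕ → ℝ := fun m => Real.sinh (l3 m / 2) with hs3def
  set c2 : ℕ → ℝ := fun m => Real.cosh (l2 m / 2) with hc2def
  set c3 : ℕ → ℝ := fun m => Real.cosh (l3 m / 2) with hc3def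
  have key : ∀ m, (-Real.cosh (l1 m) + Real.cosh (l2 m) * Real.cosh (l3 m)) /
        (Real.sinh (l2 m) * Real.sinh (l3 m)) =
      (s2 m / c2 m) * (s3 m / c3 m) *
        (1 + (1/(2 * s3 m ^2) + 1/(2 * s2 m ^2) - s1 m ^2 / (s2 m ^2 * s3 m ^2) / 2)) := by
    intro m
    rw [cosh_eq' (l1 m), cosh_eq' (l2 m), cosh_eq' (l3 m), sinh_eq' (l2 m), sinh_eq' (l3 m)]
    have h2 : s2 m ≠ 0 := (hs20 m).ne'
    have h3 : s3 m ≠ 0 := (hs30 m).ne'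
    have hc2 : c2 m ≠ 0 := (Real.cosh_pos _).ne'
    have hc3 : c3 m ≠ 0 := (Real.cosh_pos _).ne'
    simp only [hs1def, hs2def, hs3def, hc2def, hc3def] at h2 h3 hc2 hc3 ⊢
    field_simp
    ring
  simp only [key]
  have hA : Tendsto (fun m => s2 m / c2 m) atTop (𝓝 1) := by
    have : ∀ m, s2 m / c2 m = s2 m / Real.sqrt (s2 m ^ 2 + 1) := by
      intro m; rw [hc2def]; simp only; rw [cosh_half]
    simpa only [this] using tanh_lim s2 hs20 hs2
  have hB : Tendsto (fun m => s3 m / c3 m) atTop (𝓝 1) := by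
    have : ∀ m, s3 m / c3 m = s3 m / Real.sqrt (s3 m ^ 2 + 1) := by
      intro m; rw [hc3def]; simp only; rw [cosh_half]
    simpa only [this] using tanh_lim s3 hs30 hs3
  have h1s3 : Tendsto (fun m => 1/(2 * s3 m ^2)) atTop (𝓝 0) := by
    have : Tendsto (fun m => 2 * s3 m ^ 2) atTop atTop :=
      (sq_tendsto hs3).const_mul_atTop (by norm_num)
    exact (tendsto_inv_atTop_zero.comp this).congr (fun m => by simp [Function.comp, one_div])
  have h1s2 : Tendsto (fun m => 1/(2 * s2 m ^2)) atTop (𝓝 0) := by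
    have : Tendsto (fun m => 2 * s2 m ^ 2) atTop atTop :=
      (sq_tendsto hs2).const_mul_atTop (by norm_num)
    exact (tendsto_inv_atTop_zero.comp this).congr (fun m => by simp [Function.comp, one_div])
  have hrr : Tendsto (fun m => s1 m ^2 / (s2 m ^2 * s3 m ^2) / 2) atTop (𝓝 0) := by
    simpa using hr.div_const 2
  have hC : Tendsto (fun m =>
      1 + (1/(2 * s3 m ^2) + 1/(2 * s2 m ^2) - s1 m ^2 / (s2 m ^2 * s3 m ^2) / 2))
      atTop (𝓝 1) := by
    have := tendsto_const_nhds (x := (1:ℝ)) (f := atTop (α := ℕ)) |>.add ((h1s3.add h1s2).sub hrr)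
    simpa using this
  have := (hA.mul hB).mul hC
  simpa using this

theorem stmt_17 (a1 a2 a3 : ℝ) (ha1 : 0 < a1) (ha2 : 0 < a2) (ha3 : 0 < a3)
    (l1 l2 l3 u1 u2 u3 α1 α2 α3 : ℕ → ℝ)
    (hl1 : ∀ m, 0 < l1 m) (hl2 : ∀ m, 0 < l2 m) (hl3 : ∀ m, 0 < l3 m)
    (h1 : ∀ m, Real.sinh (l1 m / 2) = Real.sinh (a1 / 2) * Real.exp (u2 m + u3 m))
    (h2 : ∀ m, Real.sinh (l2 m / 2) = Real.sinh (a2 / 2) * Real.exp (u1 m + u3 m))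
    (h3 : ∀ m, Real.sinh (l3 m / 2) = Real.sinh (a3 / 2) * Real.exp (u1 m + u2 m))
    (hu1 : Tendsto u1 atTop atTop) (hu2 : Tendsto u2 atTop atTop)
    (hu3 : Tendsto u3 atTop atTop)
    (hα1 : ∀ m, α1 m ∈ Set.Ioo 0 π) (hα2 : ∀ m, α2 m ∈ Set.Ioo 0 π)
    (hα3 : ∀ m, α3 m ∈ Set.Ioo 0 π)
    (hc1 : ∀ m, Real.cos (α1 m) =
        (-Real.cosh (l1 m) + Real.cosh (l2 m) * Real.cosh (l3 m)) /
          (Real.sinh (l2 m) * Real.sinh (l3 m)))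
    (hc2 : ∀ m, Real.cos (α2 m) =
        (-Real.cosh (l2 m) + Real.cosh (l3 m) * Real.cosh (l1 m)) /
          (Real.sinh (l3 m) * Real.sinh (l1 m)))
    (hc3 : ∀ m, Real.cos (α3 m) =
        (-Real.cosh (l3 m) + Real.cosh (l1 m) * Real.cosh (l2 m)) /
          (Real.sinh (l1 m) * Real.sinh (l2 m))) :
    (Tendsto (fun m => Real.cos (α1 m)) atTop (𝓝 1) ∧
      Tendsto (fun m => Real.cos (α2 m)) atTop (𝓝 1) ∧
      Tendsto (fun m => Real.cos (α3 m)) atTop (𝓝 1)) ∧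
    (Tendsto α1 atTop (𝓝 0) ∧ Tendsto α2 atTop (𝓝 0) ∧ Tendsto α3 atTop (𝓝 0)) := by
  -- positivity of sinh halves
  have hs10 : ∀ m, 0 < Real.sinh (l1 m / 2) := fun m =>
    Real.sinh_pos_iff.2 (by linarith [hl1 m])
  have hs20 : ∀ m, 0 < Real.sinh (l2 m / 2) := fun m =>
    Real.sinh_pos_iff.2 (by linarith [hl2 m])
  have hs30 : ∀ m, 0 < Real.sinh (l3 m / 2) := fun m =>
    Real.sinh_pos_iff.2 (by linarith [hl3 m])
  have hk1 : 0 < Real.sinh (a1/2) := Real.sinh_pos_iff.2 (by linarith)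
  have hk2 : 0 < Real.sinh (a2/2) := Real.sinh_pos_iff.2 (by linarith)
  have hk3 : 0 < Real.sinh (a3/2) := Real.sinh_pos_iff.2 (by linarith)
  -- sinh(l_i/2) → ∞
  have hs1 : Tendsto (fun m => Real.sinh (l1 m / 2)) atTop atTop := by
    simp only [h1]
    exact (Real.tendsto_exp_atTop.comp (Filter.Tendsto.atTop_add_atTop hu2 hu3)).const_mul_atTop hk1
  have hs2 : Tendsto (fun m => Real.sinh (l2 m / 2)) atTop atTop := by
    simp only [h2]
    exact (Real.tendsto_exp_atTop.comp (Filter.Tendsto.atTop_add_atTop hu1 hu3)).const_mul_atTop hk2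
  have hs3 : Tendsto (fun m => Real.sinh (l3 m / 2)) atTop atTop := by
    simp only [h3]
    exact (Real.tendsto_exp_atTop.comp (Filter.Tendsto.atTop_add_atTop hu1 hu2)).const_mul_atTop hk3
  -- ratio limits
  have ratio : ∀ (b c d : ℝ) (v w x : ℕ → ℝ), 0 < c → 0 < d →
      Tendsto (fun m => (w m + x m) + (v m + x m) + (v m + w m) - 2*(w m + x m)) atTop atTop →
      Tendsto (fun m => (b * Real.exp (w m + x m)) ^ 2 /
        ((c * Real.exp (v m + x m)) ^ 2 * (d * Real.exp (v m + w m)) ^ 2)) atTop (𝓝 0) := by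
    intro b c d v w x hc hd hv
    have hkey : ∀ m, (b * Real.exp (w m + x m)) ^ 2 /
        ((c * Real.exp (v m + x m)) ^ 2 * (d * Real.exp (v m + w m)) ^ 2)
        = (b^2/(c^2*d^2)) * Real.exp
          (-(2 * ((w m + x m) + (v m + x m) + (v m + w m) - 2*(w m + x m)))) := by
      intro m
      have e2 : ∀ t : ℝ, Real.exp (t*2) = Real.exp t ^ 2 := by
        intro t; rw [pow_two, ← Real.exp_add]; ring_nf
      rw [show (-(2*((w m + x m) + (v m + x m) + (v m + w m) - 2*(w m + x m))))
          = (w m + x m)*2 - ((v m + x m)*2 + (v m + w m)*2) by ring,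
        Real.exp_sub, Real.exp_add ((v m + x m)*2) ((v m + w m)*2), e2, e2, e2,
        mul_pow, mul_pow, mul_pow]
      have e1 := (Real.exp_pos (w m + x m)).ne'
      have e4 := (Real.exp_pos (v m + x m)).ne'
      have e5 := (Real.exp_pos (v m + w m)).ne'
      field_simp
    simp only [hkey]
    have : Tendsto (fun m => Real.exp
        (-(2 * ((w m + x m) + (v m + x m) + (v m + w m) - 2*(w m + x m))))) atTop (𝓝 0) := by
      apply Real.tendsto_exp_atBot.comp
      apply tendsto_neg_atBot_iff.2  -- check name
      exact (hv.const_mul_atTop (by norm_num : (0:ℝ) < 2))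
    simpa using this.const_mul (b^2/(c^2*d^2))
  have hv1 : Tendsto (fun m => ((u2 m + u3 m) + (u1 m + u3 m) + (u1 m + u2 m)
      - 2*(u2 m + u3 m))) atTop atTop := by
    have : (fun m => ((u2 m + u3 m) + (u1 m + u3 m) + (u1 m + u2 m) - 2*(u2 m + u3 m)))
        = fun m => u1 m + u1 m := by funext m; ring
    rw [this]; exact Filter.Tendsto.atTop_add_atTop hu1 hu1
  have hv2 : Tendsto (fun m => ((u3 m + u1 m) + (u2 m + u1 m) + (u2 m + u3 m)
      - 2*(u3 m + u1 m))) atTop atTop := by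
    have : (fun m => ((u3 m + u1 m) + (u2 m + u1 m) + (u2 m + u3 m) - 2*(u3 m + u1 m)))
        = fun m => u2 m + u2 m := by funext m; ring
    rw [this]; exact Filter.Tendsto.atTop_add_atTop hu2 hu2
  have hv3 : Tendsto (fun m => ((u1 m + u2 m) + (u3 m + u2 m) + (u3 m + u1 m)
      - 2*(u1 m + u2 m))) atTop atTop := by
    have : (fun m => ((u1 m + u2 m) + (u3 m + u2 m) + (u3 m + u1 m) - 2*(u1 m + u2 m)))
        = fun m => u3 m + u3 m := by funext m; ring
    rw [this]; exact Filter.Tendsto.atTop_add_atTop hu3 hu3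
  have hr1 : Tendsto (fun m => Real.sinh (l1 m / 2) ^ 2 /
      (Real.sinh (l2 m / 2) ^ 2 * Real.sinh (l3 m / 2) ^ 2)) atTop (𝓝 0) := by
    simp only [h1, h2, h3]
    exact ratio _ _ _ u1 u2 u3 hk2 hk3 hv1
  have hr2 : Tendsto (fun m => Real.sinh (l2 m / 2) ^ 2 /
      (Real.sinh (l3 m / 2) ^ 2 * Real.sinh (l1 m / 2) ^ 2)) atTop (𝓝 0) := by
    simp only [h1, h2, h3]
    have := ratio (Real.sinh (a2/2)) (Real.sinh (a3/2)) (Real.sinh (a1/2)) u2 u3 u1 hk3 hk1 hv2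
    simpa [add_comm] using this
  have hr3 : Tendsto (fun m => Real.sinh (l3 m / 2) ^ 2 /
      (Real.sinh (l1 m / 2) ^ 2 * Real.sinh (l2 m / 2) ^ 2)) atTop (𝓝 0) := by
    simp only [h1, h2, h3]
    have := ratio (Real.sinh (a3/2)) (Real.sinh (a1/2)) (Real.sinh (a2/2)) u3 u1 u2 hk1 hk2 hv3
    simpa [add_comm] using this
  have hcos1 : Tendsto (fun m => Real.cos (α1 m)) atTop (𝓝 1) := by
    simp only [hc1]
    exact cos_lim l1 l2 l3 hs10 hs20 hs30 hs2 hs3 hr1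
  have hcos2 : Tendsto (fun m => Real.cos (α2 m)) atTop (𝓝 1) := by
    simp only [hc2]
    exact cos_lim l2 l3 l1 hs20 hs30 hs10 hs3 hs1 hr2
  have hcos3 : Tendsto (fun m => Real.cos (α3 m)) atTop (𝓝 1) := by
    simp only [hc3]
    exact cos_lim l3 l1 l2 hs30 hs10 hs20 hs1 hs2 hr3
  have angle : ∀ (α : ℕ → ℝ), (∀ m, α m ∈ Set.Ioo 0 π) →
      Tendsto (fun m => Real.cos (α m)) atTop (𝓝 1) → Tendsto α atTop (𝓝 0) := by
    intro α hα hcos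
    have heq : α = fun m => Real.arccos (Real.cos (α m)) := by
      funext m
      exact (Real.arccos_cos (hα m).1.le (hα m).2.le).symm
    rw [heq]
    have := (Real.continuous_arccos.tendsto 1).comp hcos
    simpa [Real.arccos_one, Function.comp_def] using this
  exact ⟨⟨hcos1, hcos2, hcos3⟩,
    angle α1 hα1 hcos1, angle α2 hα2 hcos2, angle α3 hα3 hcos3⟩
end

section
/- Let x0, x1, x2, x3, x4 > 0 be the edge lengths of two hyperbolic triangles t (sides x0, x1, x2) and t' (sides x0, x3, x4) glued along the edge of length x0, with angles α opposite x0 in t, β, γ adjacent to x0 in t, and α' opposite x0 in t', β', γ' adjacent to x0 in t'. Then the Delaunay angle condition α + α' ≤ β + β' + γ + γ' holds if and only if (s(x1)²+s(x2)²−s(x0)²)/(s(x1)s(x2)) + (s(x3)²+s(x4)²−s(x0)²)/(s(x3)s(x4)) ≥ 0, where s(t) = sinh(t/2). -/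
open Real
set_option maxHeartbeats 1000000

lemma core (p q r : ℝ) :
    Real.cos q * Real.sin (p+r) + Real.cos r * Real.sin (p+q) - Real.cos p * Real.sin (q+r)
      = 2 * Real.sin p * Real.cos r * Real.cos q := by
  simp [Real.sin_add]; ring

lemma tri (x0 x1 x2 α β γ : ℝ)
    (h0 : 0 < x0) (h1 : 0 < x1) (h2 : 0 < x2)
    (hα : α ∈ Set.Ioo 0 π) (hβ : β ∈ Set.Ioo 0 π) (hγ : γ ∈ Set.Ioo 0 π)
    (hsum : α + β + γ < π)
    (ht0 : Real.cosh x0 = (Real.cos α + Real.cos β * Real.cos γ) / (Real.sin β * Real.sin γ))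
    (ht1 : Real.cosh x1 = (Real.cos β + Real.cos α * Real.cos γ) / (Real.sin α * Real.sin γ))
    (ht2 : Real.cosh x2 = (Real.cos γ + Real.cos α * Real.cos β) / (Real.sin α * Real.sin β)) :
    (Real.sinh (x1/2) ^ 2 + Real.sinh (x2/2) ^ 2 - Real.sinh (x0/2) ^ 2) /
      (Real.sinh (x1/2) * Real.sinh (x2/2))
      = 2 * Real.sin ((β + γ - α)/2) * Real.cosh (x0/2) := by
  obtain ⟨ha0, haπ⟩ := hα
  obtain ⟨hb0, hbπ⟩ := hβ
  obtain ⟨hc0, hcπ⟩ := hγ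
  have sa : 0 < Real.sin α := Real.sin_pos_of_pos_of_lt_pi ha0 haπ
  have sb : 0 < Real.sin β := Real.sin_pos_of_pos_of_lt_pi hb0 hbπ
  have sc : 0 < Real.sin γ := Real.sin_pos_of_pos_of_lt_pi hc0 hcπ
  have hpi := Real.pi_pos
  have C : 0 < Real.cos ((α+β+γ)/2) :=
    Real.cos_pos_of_mem_Ioo ⟨by linarith, by linarith⟩
  have cA : 0 < Real.cos ((β+γ-α)/2) :=
    Real.cos_pos_of_mem_Ioo ⟨by linarith, by linarith⟩
  have cB : 0 < Real.cos ((α+β-γ)/2) :=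
    Real.cos_pos_of_mem_Ioo ⟨by linarith, by linarith⟩
  have cC : 0 < Real.cos ((α+γ-β)/2) :=
    Real.cos_pos_of_mem_Ioo ⟨by linarith, by linarith⟩
  have s0 : 0 < Real.sinh (x0/2) := Real.sinh_pos_iff.2 (by linarith)
  have s1 : 0 < Real.sinh (x1/2) := Real.sinh_pos_iff.2 (by linarith)
  have s2 : 0 < Real.sinh (x2/2) := Real.sinh_pos_iff.2 (by linarith)
  have chpos : 0 < Real.cosh (x0/2) := Real.cosh_pos _
  have ch : ∀ x : ℝ, Real.cosh x = 2 * Real.sinh (x/2) ^ 2 + 1 := by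
    intro x
    have h := Real.cosh_two_mul (x/2)
    rw [show 2 * (x/2) = x by ring] at h
    rw [h, Real.cosh_sq]; ring
  -- squared half-quantity formulas
  have e0 : Real.sinh (x0/2) ^ 2
      = Real.cos ((α+β+γ)/2) * Real.cos ((β+γ-α)/2) / (Real.sin β * Real.sin γ) := by
    have h := ht0; rw [ch x0] at h
    have key : Real.cos α + Real.cos (β+γ)
        = 2 * Real.cos ((α+β+γ)/2) * Real.cos ((β+γ-α)/2) := by
      rw [Real.cos_add_cos,
        show (α - (β+γ))/2 = -((β+γ-α)/2) by ring, Real.cos_neg]; ring_nf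
    rw [Real.cos_add] at key
    have hs : Real.sinh (x0/2) ^ 2 = (Real.cosh x0 - 1)/2 := by rw [ch x0]; ring
    rw [hs, ht0]
    have hne : (Real.sin β * Real.sin γ) ≠ 0 := by positivity
    field_simp
    linear_combination key
  have e1 : Real.sinh (x1/2) ^ 2
      = Real.cos ((α+β+γ)/2) * Real.cos ((α+γ-β)/2) / (Real.sin α * Real.sin γ) := by
    have h := ht1; rw [ch x1] at h
    have key : Real.cos β + Real.cos (α+γ)
        = 2 * Real.cos ((α+β+γ)/2) * Real.cos ((α+γ-β)/2) := by
      rw [Real.cos_add_cos,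
        show (β - (α+γ))/2 = -((α+γ-β)/2) by ring, Real.cos_neg]; ring_nf
    rw [Real.cos_add] at key
    have hs : Real.sinh (x1/2) ^ 2 = (Real.cosh x1 - 1)/2 := by rw [ch x1]; ring
    rw [hs, ht1]
    have hne : (Real.sin α * Real.sin γ) ≠ 0 := by positivity
    field_simp
    linear_combination key
  have e2 : Real.sinh (x2/2) ^ 2
      = Real.cos ((α+β+γ)/2) * Real.cos ((α+β-γ)/2) / (Real.sin α * Real.sin β) := by
    have h := ht2; rw [ch x2] at h
    have key : Real.cos γ + Real.cos (α+β)
        = 2 * Real.cos ((α+β+γ)/2) * Real.cos ((α+β-γ)/2) := by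
      rw [Real.cos_add_cos,
        show (γ - (α+β))/2 = -((α+β-γ)/2) by ring, Real.cos_neg]; ring_nf
    rw [Real.cos_add] at key
    have hs : Real.sinh (x2/2) ^ 2 = (Real.cosh x2 - 1)/2 := by rw [ch x2]; ring
    rw [hs, ht2]
    have hne : (Real.sin α * Real.sin β) ≠ 0 := by positivity
    field_simp
    linear_combination key
  have eh : Real.cosh (x0/2) ^ 2
      = Real.cos ((α+β-γ)/2) * Real.cos ((α+γ-β)/2) / (Real.sin β * Real.sin γ) := by
    have h := ht0; rw [ch x0] at h
    have hc2 : Real.cosh (x0/2) ^ 2 = Real.sinh (x0/2) ^ 2 + 1 := Real.cosh_sq _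
    have key : Real.cos α + Real.cos (β-γ)
        = 2 * Real.cos ((α+β-γ)/2) * Real.cos ((α+γ-β)/2) := by
      rw [Real.cos_add_cos,
        show (α - (β-γ))/2 = (α+γ-β)/2 by ring]; ring_nf
    rw [Real.cos_sub] at key
    have hs : Real.cosh (x0/2) ^ 2 = (Real.cosh x0 + 1)/2 := by rw [hc2, ch x0]; ring
    rw [hs, ht0]
    field_simp
    linear_combination key
  -- D = R
  set D := 2 * Real.cosh (x0/2) * Real.sinh (x1/2) * Real.sinh (x2/2) with hDdef
  set R := 2 * Real.cos ((α+β+γ)/2) * Real.cos ((α+β-γ)/2) * Real.cos ((α+γ-β)/2) /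
      (Real.sin α * Real.sin β * Real.sin γ) with hRdef
  have hDpos : 0 < D := by positivity
  have hRpos : 0 < R := by positivity
  have hD2 : D ^ 2 = R ^ 2 := by
    have : D ^ 2 = 4 * Real.cosh (x0/2) ^ 2 * Real.sinh (x1/2) ^ 2 * Real.sinh (x2/2) ^ 2 := by
      rw [hDdef]; ring
    rw [this, eh, e1, e2, hRdef]
    field_simp
    ring
  have hDR : D = R := by
    have h : (D - R) * (D + R) = 0 := by linear_combination hD2
    rcases mul_eq_zero.1 h with h' | h'
    · linarith
    · linarith
  -- key numerator identity
  have hcore := core ((β+γ-α)/2) ((α+γ-β)/2) ((α+β-γ)/2)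
  rw [show (β+γ-α)/2 + (α+β-γ)/2 = β by ring,
      show (β+γ-α)/2 + (α+γ-β)/2 = γ by ring,
      show (α+γ-β)/2 + (α+β-γ)/2 = α by ring] at hcore
  have hE : Real.sinh (x1/2) ^ 2 + Real.sinh (x2/2) ^ 2 - Real.sinh (x0/2) ^ 2
      = Real.sin ((β+γ-α)/2) * D := by
    rw [e0, e1, e2, hDR, hRdef]
    field_simp
    linear_combination hcore
  rw [hE, hDdef]
  field_simp

theorem stmt_19 (x0 x1 x2 x3 x4 α β γ α' β' γ' : ℝ)
    (h0 : 0 < x0) (h1 : 0 < x1) (h2 : 0 < x2) (h3 : 0 < x3) (h4 : 0 < x4)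
    (hα : α ∈ Set.Ioo 0 π) (hβ : β ∈ Set.Ioo 0 π) (hγ : γ ∈ Set.Ioo 0 π)
    (hα' : α' ∈ Set.Ioo 0 π) (hβ' : β' ∈ Set.Ioo 0 π) (hγ' : γ' ∈ Set.Ioo 0 π)
    (hsum : α + β + γ < π) (hsum' : α' + β' + γ' < π)
    -- triangle t with sides x0 (opposite α), x1 (opposite β), x2 (opposite γ)
    (ht0 : Real.cosh x0 = (Real.cos α + Real.cos β * Real.cos γ) /
        (Real.sin β * Real.sin γ))
    (ht1 : Real.cosh x1 = (Real.cos β + Real.cos α * Real.cos γ) /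
        (Real.sin α * Real.sin γ))
    (ht2 : Real.cosh x2 = (Real.cos γ + Real.cos α * Real.cos β) /
        (Real.sin α * Real.sin β))
    -- triangle t' with sides x0 (opposite α'), x3 (opposite β'), x4 (opposite γ')
    (ht0' : Real.cosh x0 = (Real.cos α' + Real.cos β' * Real.cos γ') /
        (Real.sin β' * Real.sin γ'))
    (ht3 : Real.cosh x3 = (Real.cos β' + Real.cos α' * Real.cos γ') /
        (Real.sin α' * Real.sin γ'))
    (ht4 : Real.cosh x4 = (Real.cos γ' + Real.cos α' * Real.cos β') /
        (Real.sin α' * Real.sin β')) :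
    α + α' ≤ β + β' + γ + γ' ↔
      (Real.sinh (x1 / 2) ^ 2 + Real.sinh (x2 / 2) ^ 2 - Real.sinh (x0 / 2) ^ 2) /
          (Real.sinh (x1 / 2) * Real.sinh (x2 / 2)) +
        (Real.sinh (x3 / 2) ^ 2 + Real.sinh (x4 / 2) ^ 2 - Real.sinh (x0 / 2) ^ 2) /
          (Real.sinh (x3 / 2) * Real.sinh (x4 / 2)) ≥ 0 := by
  have F := tri x0 x1 x2 α β γ h0 h1 h2 hα hβ hγ hsum ht0 ht1 ht2
  have F' := tri x0 x3 x4 α' β' γ' h0 h3 h4 hα' hβ' hγ' hsum' ht0' ht3 ht4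
  rw [F, F']
  obtain ⟨ha0, haπ⟩ := hα
  obtain ⟨hb0, hbπ⟩ := hβ
  obtain ⟨hc0, hcπ⟩ := hγ
  obtain ⟨ha0', haπ'⟩ := hα'
  obtain ⟨hb0', hbπ'⟩ := hβ'
  obtain ⟨hc0', hcπ'⟩ := hγ'
  have hpi := Real.pi_pos
  set A := (β + γ - α)/2 with hA
  set A' := (β' + γ' - α')/2 with hA'
  have hAlb : -(π/2) < A := by rw [hA]; linarith
  have hAub : A < π/2 := by rw [hA]; linarith
  have hAlb' : -(π/2) < A' := by rw [hA']; linarith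
  have hAub' : A' < π/2 := by rw [hA']; linarith
  have chpos : 0 < Real.cosh (x0/2) := Real.cosh_pos _
  have hcos : 0 < Real.cos ((A - A')/2) :=
    Real.cos_pos_of_mem_Ioo ⟨by linarith, by linarith⟩
  have hsin : Real.sin A + Real.sin A'
      = 2 * Real.sin ((A + A')/2) * Real.cos ((A - A')/2) := by
    have s1 := Real.sin_add ((A + A')/2) ((A - A')/2)
    have s2 := Real.sin_sub ((A + A')/2) ((A - A')/2)
    rw [show (A + A')/2 + (A - A')/2 = A by ring] at s1
    rw [show (A + A')/2 - (A - A')/2 = A' by ring] at s2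
    rw [s1, s2]; ring
  have hsum2 : 2 * Real.sin A * Real.cosh (x0/2) + 2 * Real.sin A' * Real.cosh (x0/2)
      = 4 * Real.cosh (x0/2) * Real.cos ((A - A')/2) * Real.sin ((A + A')/2) := by
    linear_combination (2 * Real.cosh (x0/2)) * hsin
  rw [hsum2]
  constructor
  · intro h
    have h1 : 0 ≤ (A + A')/2 := by rw [hA, hA']; linarith
    have h2 : (A + A')/2 ≤ π := by rw [hA, hA']; linarith
    have := Real.sin_nonneg_of_nonneg_of_le_pi h1 h2
    positivity
  · intro h
    by_contra hc
    push_neg at hc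
    have h1 : (A + A')/2 < 0 := by rw [hA, hA']; linarith
    have h2 : -π < (A + A')/2 := by linarith
    have hneg : Real.sin ((A + A')/2) < 0 := Real.sin_neg_of_neg_of_neg_pi_lt h1 h2
    nlinarith [mul_pos chpos hcos]
end
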